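/- Let G be a graph, and suppose the binary relation 'u has an escape path to w or u = w' is considered on V(G). For every vertex v of a caterpillar, either v is a leaf or there is an escape path from v to a leaf; hence for each k, max over vertices v of |I^k(v)| is attained at a leaf. -/

import Mathlib

open scoped Classical

variable {V : Type*}

/-- `P = p 1, p 2, …, p n` is an escape path in `G` (from `p 1` to `p n`):
a path in `G` whose last vertex `p n` has degree 1 and whose vertices
`p i` for `2 ≤ i ≤ n - 2` have degree 2. -/
def IsEscapePath [Fintype V] (G : SimpleGraph V) (n : ℕ) (p : ℕ → V) : Prop :=
  1 ≤ n ∧ Set.InjOn p (Set.Icc 1 n) ∧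
  (∀ i, 1 ≤ i → i < n → G.Adj (p i) (p (i + 1))) ∧
  G.degree (p n) = 1 ∧
  ∀ i, 2 ≤ i → i ≤ n - 2 → G.degree (p i) = 2

/-- The flip of the path `p 1, …, p n`: it maps `p i` to `p (n + 1 - i)` and
fixes every vertex outside the path. -/
noncomputable def flipP (n : ℕ) (p : ℕ → V) : V → V := fun x =>
  if h : ∃ i, 1 ≤ i ∧ i ≤ n ∧ p i = x then p (n + 1 - h.choose) else x

/-- `s` is an independent set of `G`. -/
def IndepSet (G : SimpleGraph V) (s : Set V) : Prop :=
  ∀ x ∈ s, ∀ y ∈ s, x ≠ y → ¬ G.Adj x y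

/-- The star `I^k_G(u)`: the family of independent `k`-subsets of `G`
containing the vertex `u`. -/
noncomputable def star [Fintype V] (G : SimpleGraph V) (k : ℕ) (u : V) :
    Finset (Finset V) :=
  Finset.univ.filter
    (fun A : Finset V => A.card = k ∧ u ∈ A ∧
      ∀ x ∈ A, ∀ y ∈ A, x ≠ y → ¬ G.Adj x y)

/-- A caterpillar: a finite tree (on at least two vertices) such that deleting all
leaves (vertices of degree 1) and their incident edges yields a path graph. -/
def IsCaterpillar [Fintype V] (G : SimpleGraph V) : Prop :=
  G.IsTree ∧ 2 ≤ Fintype.card V ∧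
    ∃ m : ℕ,
      Nonempty ((G.induce {v : V | G.degree v ≠ 1}) ≃g SimpleGraph.pathGraph m)

/-! ### Auxiliary lemmas -/

section Aux

open SimpleGraph Finset

variable [Fintype V] {G : SimpleGraph V}

lemma nbr_eq_of_degree_one {u w : V} (h : G.degree u = 1) (hw : G.Adj u w) :
    ∀ x, G.Adj u x → x = w := by
  intro x hx
  have hsub : ({w} : Finset V) ⊆ G.neighborFinset u := by
    simp [Finset.singleton_subset_iff, SimpleGraph.mem_neighborFinset, hw]
  have hcard : (G.neighborFinset u).card ≤ ({w} : Finset V).card := by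
    rw [Finset.card_singleton]
    rw [← SimpleGraph.card_neighborFinset_eq_degree] at h
    omega
  have heq := Finset.eq_of_subset_of_card_le hsub hcard
  have hxval : x ∈ G.neighborFinset u := (SimpleGraph.mem_neighborFinset _ _ _).mpr hx
  rw [← heq] at hxval
  simpa using hxval

lemma nbr_of_degree_two {u w w' : V} (h : G.degree u = 2) (hw : G.Adj u w)
    (hw' : G.Adj u w') (hne : w ≠ w') : ∀ x, G.Adj u x → x = w ∨ x = w' := by
  intro x hx
  have hsub : ({w, w'} : Finset V) ⊆ G.neighborFinset u := by
    intro a ha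
    rcases Finset.mem_insert.mp ha with rfl | ha
    · exact (SimpleGraph.mem_neighborFinset _ _ _).mpr hw
    · rw [Finset.mem_singleton] at ha; subst ha
      exact (SimpleGraph.mem_neighborFinset _ _ _).mpr hw'
  have hcard : (G.neighborFinset u).card ≤ ({w, w'} : Finset V).card := by
    rw [Finset.card_pair hne]
    rw [← SimpleGraph.card_neighborFinset_eq_degree] at h
    omega
  have heq := Finset.eq_of_subset_of_card_le hsub hcard
  have hxval : x ∈ G.neighborFinset u := (SimpleGraph.mem_neighborFinset _ _ _).mpr hx
  rw [← heq] at hxval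
  simpa using hxval

lemma degree_pos_of_connected (hc : G.Connected) (hcard : 2 ≤ Fintype.card V) (v : V) :
    0 < G.degree v := by
  rw [SimpleGraph.degree_pos_iff_exists_adj]
  obtain ⟨w, hw⟩ := Fintype.exists_ne_of_one_lt_card (by omega) v
  obtain ⟨q⟩ := hc.preconnected v w
  exact ⟨q.getVert 1, q.adj_snd (SimpleGraph.Walk.not_nil_of_ne (Ne.symm hw))⟩

/-- The flip inequality: along an escape path, the star at the first vertex is at
most as large as the star at the last vertex. -/
lemma flip_card_le (G : SimpleGraph V) {n : ℕ} {p : ℕ → V}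
    (hep : IsEscapePath G n p) (k : ℕ) :
    (star G k (p 1)).card ≤ (star G k (p n)).card := by
  obtain ⟨hn1, hinj, hadj, hdn, hd2⟩ := hep
  rcases eq_or_lt_of_le hn1 with h1 | hn2
  · rw [← h1]
  set σ := flipP n p with hσ
  have hptoidx : ∀ {c d : ℕ}, 1 ≤ c → c ≤ n → 1 ≤ d → d ≤ n → p c = p d → c = d :=
    fun h1 h2 h3 h4 h => hinj (Set.mem_Icc.mpr ⟨h1, h2⟩) (Set.mem_Icc.mpr ⟨h3, h4⟩) h
  have hev : ∀ i, 1 ≤ i → i ≤ n → σ (p i) = p (n + 1 - i) := by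
    intro i h1 h2
    have hex : ∃ j, 1 ≤ j ∧ j ≤ n ∧ p j = p i := ⟨i, h1, h2, rfl⟩
    rw [hσ]
    show (if h : ∃ j, 1 ≤ j ∧ j ≤ n ∧ p j = p i then p (n + 1 - h.choose) else p i)
        = p (n + 1 - i)
    rw [dif_pos hex]
    have hc := hex.choose_spec
    have : hex.choose = i := hptoidx hc.1 hc.2.1 h1 h2 hc.2.2
    rw [this]
  have hoff : ∀ x, ¬ (∃ j, 1 ≤ j ∧ j ≤ n ∧ p j = x) → σ x = x := by
    intro x hx
    rw [hσ]
    show (if h : ∃ j, 1 ≤ j ∧ j ≤ n ∧ p j = x then p (n + 1 - h.choose) else x) = x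
    rw [dif_neg hx]
  have hinv : ∀ x, σ (σ x) = x := by
    intro x
    by_cases hx : ∃ j, 1 ≤ j ∧ j ≤ n ∧ p j = x
    · obtain ⟨j, hj1, hj2, rfl⟩ := hx
      rw [hev j hj1 hj2, hev (n + 1 - j) (by omega) (by omega)]
      congr 1
      omega
    · rw [hoff x hx, hoff x hx]
  have hσinj : Function.Injective σ := Function.Involutive.injective hinv
  -- neighbor structure of the path
  have hpa : ∀ a, 2 ≤ a → a ≤ n - 2 → ∀ x, G.Adj (p a) x → x = p (a - 1) ∨ x = p (a + 1) := by
    intro a h2 hle x hx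
    have hd := hd2 a h2 hle
    have hA1 : G.Adj (p a) (p (a - 1)) := by
      have h := hadj (a - 1) (by omega) (by omega)
      have hrw : a - 1 + 1 = a := by omega
      rw [hrw] at h
      exact h.symm
    have hA2 : G.Adj (p a) (p (a + 1)) := hadj a (by omega) (by omega)
    have hne : p (a - 1) ≠ p (a + 1) := by
      intro h
      have := hptoidx (c := a - 1) (d := a + 1) (by omega) (by omega) (by omega) (by omega) h
      omega
    exact nbr_of_degree_two hd hA1 hA2 hne x hx
  have hpn : ∀ x, G.Adj (p n) x → x = p (n - 1) := by
    intro x hx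
    have hA : G.Adj (p n) (p (n - 1)) := by
      have h := hadj (n - 1) (by omega) (by omega)
      have hrw : n - 1 + 1 = n := by omega
      rw [hrw] at h
      exact h.symm
    exact nbr_eq_of_degree_one hdn hA x hx
  have hadj12 : G.Adj (p 1) (p 2) := by
    have h := hadj 1 le_rfl hn2
    norm_num at h
    exact h
  -- classification of adjacencies among path vertices
  have hclass : ∀ a b, 1 ≤ a → a ≤ n → 1 ≤ b → b ≤ n → G.Adj (p a) (p b) →
      (b + 1 = a ∨ a + 1 = b) ∨ (a = 1 ∧ b = n - 1) ∨ (a = n - 1 ∧ b = 1) := by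
    intro a b ha1 ha2 hb1 hb2 hAB
    by_cases hai : 2 ≤ a ∧ a ≤ n - 2
    · rcases hpa a hai.1 hai.2 (p b) hAB with h | h
      · have := hptoidx hb1 hb2 (by omega) (by omega) h
        left; left; omega
      · have := hptoidx hb1 hb2 (by omega) (by omega) h
        left; right; omega
    · by_cases han : a = n
      · subst han
        have := hptoidx hb1 hb2 (by omega) (by omega) (hpn (p b) hAB)
        left; left; omega
      · by_cases hbi : 2 ≤ b ∧ b ≤ n - 2
        · rcases hpa b hbi.1 hbi.2 (p a) hAB.symm with h | h
          · have := hptoidx ha1 ha2 (by omega) (by omega) h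
            left; right; omega
          · have := hptoidx ha1 ha2 (by omega) (by omega) h
            left; left; omega
        · by_cases hbn : b = n
          · subst hbn
            have := hptoidx ha1 ha2 (by omega) (by omega) (hpn (p a) hAB.symm)
            left; right; omega
          · have hane : a ≠ b := by
              intro h
              subst h
              exact G.irrefl hAB
            right; omega
  -- independence is preserved by the flip
  have hcore : ∀ (A : Finset V), p 1 ∈ A → (∀ x ∈ A, ∀ y ∈ A, x ≠ y → ¬ G.Adj x y) →
      ∀ x ∈ A, ∀ y ∈ A, x ≠ y → ¬ G.Adj (σ x) (σ y) := by
    intro A hvA hind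
    have hmix : ∀ x ∈ A, (∃ i, 1 ≤ i ∧ i ≤ n ∧ p i = x) →
        ∀ y ∈ A, ¬ (∃ j, 1 ≤ j ∧ j ≤ n ∧ p j = y) → ¬ G.Adj (σ x) (σ y) := by
      intro x hx hxP y hy hyoff hAdj
      obtain ⟨i, hi1, hi2, rfl⟩ := hxP
      rw [hev i hi1 hi2, hoff y hyoff] at hAdj
      by_cases hri : 2 ≤ n + 1 - i ∧ n + 1 - i ≤ n - 2
      · rcases hpa (n + 1 - i) hri.1 hri.2 y hAdj with h | h
        · exact hyoff ⟨n + 1 - i - 1, by omega, by omega, h.symm⟩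
        · exact hyoff ⟨n + 1 - i + 1, by omega, by omega, h.symm⟩
      · by_cases hrn : n + 1 - i = n
        · rw [hrn] at hAdj
          exact hyoff ⟨n - 1, by omega, by omega, (hpn y hAdj).symm⟩
        · by_cases hr1 : n + 1 - i = 1
          · rw [hr1] at hAdj
            exact hind (p 1) hvA y hy (fun h => hyoff ⟨1, le_rfl, by omega, h⟩) hAdj
          · -- n + 1 - i = n - 1, so i = 2
            have hi2' : i = 2 := by omega
            refine hind (p 1) hvA (p i) hx ?_ ?_
            · intro h
              have := hptoidx le_rfl (by omega) hi1 hi2 h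
              omega
            · rw [hi2']
              exact hadj12
    intro x hx y hy hxy hAdj
    by_cases hxP : ∃ i, 1 ≤ i ∧ i ≤ n ∧ p i = x
    · by_cases hyP : ∃ j, 1 ≤ j ∧ j ≤ n ∧ p j = y
      · obtain ⟨i, hi1, hi2, rfl⟩ := hxP
        obtain ⟨j, hj1, hj2, rfl⟩ := hyP
        rw [hev i hi1 hi2, hev j hj1 hj2] at hAdj
        have hij : i ≠ j := fun h => hxy (by rw [h])
        rcases hclass (n + 1 - i) (n + 1 - j) (by omega) (by omega) (by omega) (by omega)
            hAdj with (h | h) | (⟨h1, h2⟩ | ⟨h1, h2⟩)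
        · have hij' : i + 1 = j := by omega
          have h := hadj i hi1 (by omega)
          rw [hij'] at h
          exact hind _ hx _ hy hxy h
        · have hij' : j + 1 = i := by omega
          have h := hadj j hj1 (by omega)
          rw [hij'] at h
          exact hind _ hy _ hx (Ne.symm hxy) h
        · -- i = n, j = 2
          have hj' : j = 2 := by omega
          refine hind (p 1) hvA (p j) hy ?_ ?_
          · intro h
            have := hptoidx le_rfl (by omega) hj1 hj2 h
            omega
          · rw [hj']; exact hadj12
        · -- j = n, i = 2
          have hi' : i = 2 := by omega
          refine hind (p 1) hvA (p i) hx ?_ ?_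
          · intro h
            have := hptoidx le_rfl (by omega) hi1 hi2 h
            omega
          · rw [hi']; exact hadj12
      · exact hmix x hx hxP y hy hyP hAdj
    · by_cases hyP : ∃ j, 1 ≤ j ∧ j ≤ n ∧ p j = y
      · exact hmix y hy hyP x hx hxP hAdj.symm
      · rw [hoff x hxP, hoff y hyP] at hAdj
        exact hind x hx y hy hxy hAdj
  -- the injection on stars
  apply Finset.card_le_card_of_injOn (fun A => A.image σ)
  · intro A hA
    simp only [_root_.star, Finset.mem_coe, Finset.mem_filter, Finset.mem_univ, true_and] at hA ⊢
    obtain ⟨hcard, hvA, hind⟩ := hA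
    refine ⟨by rw [Finset.card_image_of_injective _ hσinj]; exact hcard, ?_, ?_⟩
    · refine Finset.mem_image.mpr ⟨p 1, hvA, ?_⟩
      rw [hev 1 le_rfl (by omega)]
      norm_num
    · intro x' hx' y' hy' hne'
      obtain ⟨x, hx, rfl⟩ := Finset.mem_image.mp hx'
      obtain ⟨y, hy, rfl⟩ := Finset.mem_image.mp hy'
      exact hcore A hvA hind x hx y hy (fun h => hne' (by rw [h]))
  · intro A hA B hB h
    exact Finset.image_injective hσinj h

end Aux

section Part1

open SimpleGraph Finset

/-- Part 1: every vertex of a caterpillar is a leaf or admits an escape path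
to a leaf. -/
lemma caterpillar_part1 [Fintype V] (G : SimpleGraph V) (hG : IsCaterpillar G) :
    ∀ v : V, G.degree v = 1 ∨
      ∃ (n : ℕ) (p : ℕ → V) (ℓ : V), G.degree ℓ = 1 ∧
        IsEscapePath G n p ∧ p 1 = v ∧ p n = ℓ := by
  obtain ⟨htree, hcard, m, ⟨e⟩⟩ := hG
  have hdegpos : ∀ u : V, 0 < G.degree u :=
    degree_pos_of_connected htree.isConnected hcard
  intro v
  by_cases hv : G.degree v = 1
  · exact Or.inl hv
  right
  -- Case A : v has a pendant leaf
  by_cases hleaf : ∃ ℓ, G.Adj v ℓ ∧ G.degree ℓ = 1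
  · obtain ⟨ℓ, hadjvl, hℓ⟩ := hleaf
    have hvl : v ≠ ℓ := by
      intro h
      rw [← h] at hℓ
      exact hv hℓ
    set q : ℕ → V := fun i => if i = 1 then v else ℓ with hq
    have hq1 : ∀ i, i = 1 → q i = v := by intro i h; simp only [hq, if_pos h]
    have hq2 : ∀ i, i ≠ 1 → q i = ℓ := by intro i h; simp only [hq, if_neg h]
    refine ⟨2, q, ℓ, hℓ, ⟨by norm_num, ?_, ?_, ?_, ?_⟩,
        hq1 1 rfl, hq2 2 (by norm_num)⟩
    · intro a ha b hb hab
      rw [Set.mem_Icc] at ha hb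
      by_cases ha1 : a = 1 <;> by_cases hb1 : b = 1
      · omega
      · rw [hq1 a ha1, hq2 b hb1] at hab
        exact absurd hab hvl
      · rw [hq2 a ha1, hq1 b hb1] at hab
        exact absurd hab.symm hvl
      · omega
    · intro i hi1 hi2
      have hone : i = 1 := by omega
      rw [hq1 i hone, hq2 (i + 1) (by omega)]
      exact hadjvl
    · rw [hq2 2 (by norm_num)]
      exact hℓ
    · intro i h2 hle
      omega
  -- Case B : all neighbours of v are non-leaves (spine vertices)
  push_neg at hleaf
  -- general facts about the spine
  have hspine : ∀ u : ({w : V | G.degree w ≠ 1} : Set V),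
      ((G.neighborFinset ↑u).filter (fun w => G.degree w ≠ 1)).card
        = ((SimpleGraph.pathGraph m).neighborFinset (e u)).card := by
    intro u
    apply Finset.card_bij (fun a ha => e ⟨a, (Finset.mem_filter.mp ha).2⟩)
    · intro a ha
      rw [SimpleGraph.mem_neighborFinset, e.map_adj_iff]
      have := (Finset.mem_filter.mp ha).1
      rw [SimpleGraph.mem_neighborFinset] at this
      exact this
    · intro a1 ha1 a2 ha2 h
      have := e.toEquiv.injective h
      exact Subtype.ext_iff.mp this
    · intro b hb
      rw [SimpleGraph.mem_neighborFinset] at hb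
      have hadjb : G.Adj ↑u ↑(e.symm b) := by
        have : (SimpleGraph.pathGraph m).Adj (e u) (e (e.symm b)) := by
          rw [e.apply_symm_apply]; exact hb
        exact e.map_adj_iff.mp this
      refine ⟨↑(e.symm b), Finset.mem_filter.mpr
        ⟨(SimpleGraph.mem_neighborFinset _ _ _).mpr hadjb, (e.symm b).2⟩, ?_⟩
      rw [show (⟨↑(e.symm b), (e.symm b).2⟩ : ({w : V | G.degree w ≠ 1} : Set V))
          = e.symm b from Subtype.ext rfl]
      exact e.apply_symm_apply b
  have hdecomp : ∀ u : V,
      ((G.neighborFinset u).filter (fun w => G.degree w ≠ 1)).card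
        + ((G.neighborFinset u).filter (fun w => ¬ G.degree w ≠ 1)).card
        = G.degree u := by
    intro u
    rw [SimpleGraph.degree]
    exact Finset.card_filter_add_card_filter_not _
  have hpd_end : ∀ j : Fin m, (j.val = 0 ∨ j.val + 1 = m) →
      ((SimpleGraph.pathGraph m).neighborFinset j).card ≤ 1 := by
    intro j hj
    rw [Finset.card_le_one]
    intro a ha b hb
    rw [SimpleGraph.mem_neighborFinset, SimpleGraph.pathGraph_adj] at ha hb
    have h1 := a.isLt
    have h2 := b.isLt
    have h3 := j.isLt
    apply Fin.ext
    omega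
  have hpd_two : ∀ j : Fin m, 0 < j.val → j.val + 1 < m →
      ((SimpleGraph.pathGraph m).neighborFinset j).card = 2 := by
    intro j h0 h1
    have heq : (SimpleGraph.pathGraph m).neighborFinset j
        = {⟨j.val - 1, by omega⟩, ⟨j.val + 1, by omega⟩} := by
      ext k
      have hk := k.isLt
      simp only [SimpleGraph.mem_neighborFinset, SimpleGraph.pathGraph_adj,
        Finset.mem_insert, Finset.mem_singleton, Fin.ext_iff]
      omega
    rw [heq, Finset.card_pair (by simp only [ne_eq, Fin.ext_iff]; omega)]
  -- v itself is an interior spine vertex of degree 2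
  have hvS : v ∈ ({w : V | G.degree w ≠ 1} : Set V) := hv
  have hnegempty : ∀ u : V, (∀ w, G.Adj u w → G.degree w ≠ 1) →
      ((G.neighborFinset u).filter (fun w => ¬ G.degree w ≠ 1)).card = 0 := by
    intro u hu
    rw [Finset.card_eq_zero, Finset.filter_eq_empty_iff]
    intro w hw
    rw [SimpleGraph.mem_neighborFinset] at hw
    exact not_not_intro (hu w hw)
  set j0 : Fin m := e ⟨v, hvS⟩ with hj0
  have hvdeg : G.degree v = ((SimpleGraph.pathGraph m).neighborFinset j0).card := by
    have h3 : ((G.neighborFinset v).filter (fun w => G.degree w ≠ 1)).card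
        = ((SimpleGraph.pathGraph m).neighborFinset j0).card := hspine ⟨v, hvS⟩
    have h1 := hdecomp v
    have h2 := hnegempty v hleaf
    omega
  have hm1 : 0 < m := j0.pos
  have hj0int : 0 < j0.val ∧ j0.val + 1 < m := by
    have hd2 : 2 ≤ G.degree v := by
      have := hdegpos v
      omega
    by_contra hcon
    have hj0lt := j0.isLt
    have : j0.val = 0 ∨ j0.val + 1 = m := by omega
    have := hpd_end j0 this
    omega
  -- the spine walk
  have hminlt : ∀ k : ℕ, min k (m - 1) < m := fun k => by omega
  set sp : ℕ → V := fun k => ↑(e.symm ⟨min k (m - 1), hminlt k⟩) with hsp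
  have hspS : ∀ k, G.degree (sp k) ≠ 1 := fun k => (e.symm ⟨min k (m - 1), hminlt k⟩).2
  have hspv : sp j0.val = v := by
    have hfin : (⟨min j0.val (m - 1), hminlt j0.val⟩ : Fin m) = j0 := by
      apply Fin.ext
      have := j0.isLt
      show min j0.val (m - 1) = j0.val
      omega
    show ↑(e.symm ⟨min j0.val (m - 1), hminlt j0.val⟩) = v
    rw [hfin, hj0, e.symm_apply_apply]
  have hadj_sp : ∀ k, k + 1 ≤ m - 1 → G.Adj (sp k) (sp (k + 1)) := by
    intro k hk
    have hpa : (SimpleGraph.pathGraph m).Adj ⟨min k (m - 1), hminlt k⟩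
        ⟨min (k + 1) (m - 1), hminlt (k + 1)⟩ := by
      rw [SimpleGraph.pathGraph_adj]
      left
      show min k (m - 1) + 1 = min (k + 1) (m - 1)
      omega
    have h := e.symm.map_adj_iff.mpr hpa
    exact h
  have hspcard : ∀ k, k ≤ m - 1 →
      ((G.neighborFinset (sp k)).filter (fun w => G.degree w ≠ 1)).card
        = ((SimpleGraph.pathGraph m).neighborFinset ⟨min k (m - 1), hminlt k⟩).card := by
    intro k hk
    have h := hspine (e.symm ⟨min k (m - 1), hminlt k⟩)
    rw [e.apply_symm_apply] at h
    exact h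
  have hsp_inj : ∀ k1, k1 ≤ m - 1 → ∀ k2, k2 ≤ m - 1 → sp k1 = sp k2 → k1 = k2 := by
    intro k1 h1 k2 h2 h
    have h0 : (↑(e.symm ⟨min k1 (m - 1), hminlt k1⟩) : V)
        = ↑(e.symm ⟨min k2 (m - 1), hminlt k2⟩) := h
    have h' := e.toEquiv.symm.injective (Subtype.ext h0)
    have h'' : min k1 (m - 1) = min k2 (m - 1) := by simpa using h'
    omega
  -- the end of the spine has a pendant leaf
  have hQend : ∃ ℓ, G.Adj (sp (m - 1)) ℓ ∧ G.degree ℓ = 1 := by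
    by_contra hq
    push_neg at hq
    have h1 := hdecomp (sp (m - 1))
    have h2 := hnegempty (sp (m - 1)) (fun w hw h => hq w hw h)
    have h3 := hspcard (m - 1) le_rfl
    have h4 := hpd_end ⟨min (m - 1) (m - 1), hminlt (m - 1)⟩
      (by right; show min (m - 1) (m - 1) + 1 = m; omega)
    have h5 := hspS (m - 1)
    have h6 := hdegpos (sp (m - 1))
    omega
  have hPex : ∃ k, j0.val + 1 ≤ k ∧ k ≤ m - 1 ∧
      ∃ ℓ, G.Adj (sp k) ℓ ∧ G.degree ℓ = 1 := ⟨m - 1, by omega, le_rfl, hQend⟩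
  set t := Nat.find hPex with ht
  have hPt := Nat.find_spec hPex
  have hPmin : ∀ k, k < t → ¬ (j0.val + 1 ≤ k ∧ k ≤ m - 1 ∧
      ∃ ℓ, G.Adj (sp k) ℓ ∧ G.degree ℓ = 1) := fun k hk => Nat.find_min hPex hk
  obtain ⟨htlb, htub, hQt⟩ := hPt
  -- interior spine vertices strictly between j0 and t have degree 2
  have hmid : ∀ k, j0.val < k → k < t → G.degree (sp k) = 2 := by
    intro k hk1 hk2
    have hkle : k ≤ m - 1 := by omega
    have hnQ : ¬ ∃ ℓ, G.Adj (sp k) ℓ ∧ G.degree ℓ = 1 := by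
      intro hq
      exact hPmin k hk2 ⟨by omega, hkle, hq⟩
    push_neg at hnQ
    have h1 := hdecomp (sp k)
    have h2 := hnegempty (sp k) (fun w hw h => hnQ w hw h)
    have h3 := hspcard k hkle
    have h4 := hpd_two ⟨min k (m - 1), hminlt k⟩
      (by show 0 < min k (m - 1); omega)
      (by show min k (m - 1) + 1 < m; omega)
    omega
  obtain ⟨ℓ, hadjtl, hℓ1⟩ := hQt
  set t0 := j0.val with ht0
  set n := t - t0 + 2 with hn
  have hn3 : 3 ≤ n := by omega
  set p : ℕ → V := fun i => if i = n then ℓ else sp (t0 + i - 1) with hp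
  have hpval : ∀ i, i ≠ n → p i = sp (t0 + i - 1) := by
    intro i hi
    rw [hp]
    simp only [if_neg hi]
  have hpnl : p n = ℓ := by
    show (if n = n then ℓ else sp (t0 + n - 1)) = ℓ
    exact if_pos rfl
  refine ⟨n, p, ℓ, hℓ1, ⟨by omega, ?_, ?_, ?_, ?_⟩, ?_, ?_⟩
  · -- injectivity
    intro a ha b hb hab
    rw [Set.mem_Icc] at ha hb
    by_cases ha1 : a = n <;> by_cases hb1 : b = n
    · omega
    · rw [ha1, hp] at hab
      simp only [if_pos rfl, if_neg hb1] at hab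
      exact absurd (hab ▸ hℓ1) (hspS (t0 + b - 1))
    · rw [hb1, hp] at hab
      simp only [if_pos rfl, if_neg ha1] at hab
      exact absurd (hab.symm ▸ hℓ1) (hspS (t0 + a - 1))
    · rw [hpval a ha1, hpval b hb1] at hab
      have := hsp_inj (t0 + a - 1) (by omega) (t0 + b - 1) (by omega) hab
      omega
  · -- adjacency
    intro i hi1 hi2
    have hin : i ≠ n := by omega
    rw [hpval i hin]
    by_cases hi1n : i + 1 = n
    · rw [hp]
      simp only [if_pos hi1n]
      have : t0 + i - 1 = t := by omega
      rw [this]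
      exact hadjtl
    · rw [hpval (i + 1) hi1n]
      have hrw : t0 + (i + 1) - 1 = (t0 + i - 1) + 1 := by omega
      rw [hrw]
      exact hadj_sp (t0 + i - 1) (by omega)
  · -- last vertex is a leaf
    rw [hpnl]
    exact hℓ1
  · -- interior vertices have degree 2
    intro i h2 hle
    rw [hpval i (by omega)]
    exact hmid (t0 + i - 1) (by omega) (by omega)
  · -- p 1 = v
    rw [hpval 1 (by omega)]
    have : t0 + 1 - 1 = t0 := by omega
    rw [this]
    exact hspv
  · exact hpnl

end Part1

/-- in a caterpillar, every vertex is a leaf or has an escape path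
to a leaf; hence for each `k` the maximum of `|I^k(v)|` over all vertices is
attained at a leaf. -/
theorem caterpillar_leaf_or_escapePath_and_max_at_leaf [Fintype V]
    (G : SimpleGraph V) (hG : IsCaterpillar G) :
    (∀ v : V, G.degree v = 1 ∨
        ∃ (n : ℕ) (p : ℕ → V) (ℓ : V), G.degree ℓ = 1 ∧
          IsEscapePath G n p ∧ p 1 = v ∧ p n = ℓ) ∧
      ∀ k : ℕ, ∃ ℓ : V, G.degree ℓ = 1 ∧
        ∀ v : V, (star G k v).card ≤ (star G k ℓ).card := by
  refine ⟨caterpillar_part1 G hG, ?_⟩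
  intro k
  have hne : Nonempty V := Fintype.card_pos_iff.mp (by have := hG.2.1; omega)
  obtain ⟨v0, -, hv0⟩ := Finset.exists_max_image Finset.univ
    (fun v => (star G k v).card) ⟨Classical.arbitrary V, Finset.mem_univ _⟩
  rcases caterpillar_part1 G hG v0 with hleaf | ⟨n, p, ℓ, hℓ, hep, hp1, hpn⟩
  · exact ⟨v0, hleaf, fun v => hv0 v (Finset.mem_univ v)⟩
  · refine ⟨ℓ, hℓ, fun v => le_trans (hv0 v (Finset.mem_univ v)) ?_⟩
    have := flip_card_le G hep k
    rw [hp1, hpn] at this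
    exact this
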